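/- Let g : ℙ² → ℙ⁴ be given by the degree-3 monomials g = (x₀²x₁, x₁²x₂, x₂²x₀, x₀x₁x₂, g₄) where g₄ is any homogeneous cubic in which x₀³ has nonzero coefficient, and let G = y₄²y₃ + y₄G₂ + G₃ with G₂, G₃ homogeneous of degrees 2, 3 in y₀,…,y₃. Then G(g₀,…,g₄) is not the zero polynomial; more precisely, the coefficient of x₀⁷x₁x₂ in G(g₀,…,g₄) is nonzero. -/

import Mathlib

open MvPolynomial

namespace Stmt4Aux

variable {k : Type*} [Field k]

/-- Weight of an exponent vector: `u 0 - u 1`. -/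
def w (u : Fin 3 →₀ ℕ) : ℤ := (u 0 : ℤ) - (u 1 : ℤ)

lemma w_add (a b : Fin 3 →₀ ℕ) : w (a + b) = w a + w b := by
  simp only [w, Finsupp.add_apply]
  push_cast
  ring

/-- `p` has all monomials of weight at most `B`. -/
def Bdd (p : MvPolynomial (Fin 3) k) (B : ℤ) : Prop :=
  ∀ u : Fin 3 →₀ ℕ, coeff u p ≠ 0 → w u ≤ B

lemma Bdd.mono {p : MvPolynomial (Fin 3) k} {B C : ℤ} (h : Bdd p B) (hBC : B ≤ C) :
    Bdd p C := fun u hu => (h u hu).trans hBC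

lemma Bdd_C (c : k) : Bdd (C c : MvPolynomial (Fin 3) k) 0 := by
  intro u hu
  classical
  have : u = 0 := by
    by_contra h
    simp [coeff_C, Ne.symm h] at hu
  simp [this, w]

lemma Bdd_zero (B : ℤ) : Bdd (0 : MvPolynomial (Fin 3) k) B := by
  intro u hu; simp at hu

lemma Bdd.mul {p q : MvPolynomial (Fin 3) k} {B C : ℤ} (hp : Bdd p B) (hq : Bdd q C) :
    Bdd (p * q) (B + C) := by
  intro u hu
  classical
  rw [coeff_mul] at hu
  obtain ⟨x, hx, hne⟩ := Finset.exists_ne_zero_of_sum_ne_zero hu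
  have hx' : x.1 + x.2 = u := Finset.HasAntidiagonal.mem_antidiagonal.mp hx
  have h1 : coeff x.1 p ≠ 0 := fun h => hne (by rw [h, zero_mul])
  have h2 : coeff x.2 q ≠ 0 := fun h => hne (by rw [h, mul_zero])
  calc w u = w x.1 + w x.2 := by rw [← hx', w_add]
    _ ≤ B + C := add_le_add (hp _ h1) (hq _ h2)

lemma Bdd.pow {p : MvPolynomial (Fin 3) k} {B : ℤ} (hp : Bdd p B) (n : ℕ) :
    Bdd (p ^ n) (n * B) := by
  induction n with
  | zero => simpa using Bdd_C (1 : k)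
  | succ n ih =>
      have := ih.mul hp
      rw [← pow_succ] at this
      convert this using 1
      push_cast; ring

lemma Bdd.sum {ι : Type*} (s : Finset ι) (f : ι → MvPolynomial (Fin 3) k) (B : ℤ)
    (h : ∀ i ∈ s, Bdd (f i) B) : Bdd (∑ i ∈ s, f i) B := by
  classical
  induction s using Finset.induction_on with
  | empty => simpa using Bdd_zero B
  | @insert a s' hx ih =>
      rw [Finset.sum_insert hx]
      intro u hu
      rw [coeff_add] at hu
      rcases (by by_contra hcon; push_neg at hcon; simp [hcon.1, hcon.2] at hu :
          coeff u (f a) ≠ 0 ∨ coeff u (∑ i ∈ s', f i) ≠ 0) with h1 | h2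
      · exact h a (Finset.mem_insert_self a s') u h1
      · exact ih (fun i hi => h i (Finset.mem_insert_of_mem hi)) u h2

lemma Bdd.prod {ι : Type*} (s : Finset ι) (f : ι → MvPolynomial (Fin 3) k) (b : ι → ℤ)
    (h : ∀ i ∈ s, Bdd (f i) (b i)) : Bdd (∏ i ∈ s, f i) (∑ i ∈ s, b i) := by
  classical
  induction s using Finset.induction_on with
  | empty => simpa using Bdd_C (1 : k)
  | @insert a s' hx ih =>
      rw [Finset.prod_insert hx, Finset.sum_insert hx]
      exact (h a (Finset.mem_insert_self a s')).mul
        (ih fun i hi => h i (Finset.mem_insert_of_mem hi))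

lemma deg3 (u : Fin 3 →₀ ℕ) : u.degree = u 0 + u 1 + u 2 := by
  rw [Finsupp.degree_apply, Finset.sum_subset (Finset.subset_univ u.support)
    (fun i _ h => Finsupp.notMem_support_iff.mp h), Fin.sum_univ_three]

/-- The key structural bound: substituting weight-bound-1 polynomials into a
homogeneous polynomial of degree `d` gives weight bound `d`. -/
lemma Bdd_aeval {n : ℕ} {d : ℕ} (Q : MvPolynomial (Fin n) k) (hQ : Q.IsHomogeneous d)
    (f : Fin n → MvPolynomial (Fin 3) k) (hf : ∀ i, Bdd (f i) 1) :
    Bdd (aeval f Q) d := by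
  rw [as_sum Q, map_sum]
  apply Bdd.sum
  intro v hv
  have hcoeff : coeff v Q ≠ 0 := mem_support_iff.mp hv
  have hdeg : v.degree = d := by
    by_contra h
    exact hcoeff (hQ.coeff_eq_zero h)
  rw [aeval_monomial]
  have h1 : Bdd ((algebraMap k (MvPolynomial (Fin 3) k)) (coeff v Q)) 0 :=
    Bdd_C (coeff v Q)
  have h2 : Bdd (v.prod fun i e => f i ^ e) (∑ i ∈ v.support, (v i : ℤ) * 1) := by
    exact Bdd.prod v.support _ _ (fun i _ => (hf i).pow (v i))
  have hsum : (∑ i ∈ v.support, (v i : ℤ) * 1) = (d : ℤ) := by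
    simp only [mul_one]
    rw [← Nat.cast_sum]
    exact_mod_cast congrArg (Nat.cast : ℕ → ℤ) hdeg
  have := h1.mul h2
  rw [hsum, zero_add] at this
  exact this

lemma Bdd_X0 : Bdd (X 0 : MvPolynomial (Fin 3) k) 1 := by
  intro u hu
  classical
  rw [coeff_X'] at hu
  have : Finsupp.single (0 : Fin 3) 1 = u := by
    by_contra h; simp [h] at hu
  simp [← this, w, Finsupp.single_apply]

lemma Bdd_X1 : Bdd (X 1 : MvPolynomial (Fin 3) k) (-1) := by
  intro u hu
  classical
  rw [coeff_X'] at hu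
  have : Finsupp.single (1 : Fin 3) 1 = u := by
    by_contra h; simp [h] at hu
  simp [← this, w, Finsupp.single_apply]

lemma Bdd_X2 : Bdd (X 2 : MvPolynomial (Fin 3) k) 0 := by
  intro u hu
  classical
  rw [coeff_X'] at hu
  have : Finsupp.single (2 : Fin 3) 1 = u := by
    by_contra h; simp [h] at hu
  simp [← this, w, Finsupp.single_apply]

end Stmt4Aux

open Stmt4Aux

/-- Let `g = (x₀²x₁, x₁²x₂, x₂²x₀, x₀x₁x₂, g₄) : ℙ² → ℙ⁴` where `g₄` is a
homogeneous cubic whose `x₀³`-coefficient is nonzero, and let `G = y₄²y₃ + y₄G₂ + G₃` with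
`G₂, G₃` homogeneous of degrees `2, 3` in `y₀,…,y₃`.  Then the coefficient of `x₀⁷x₁x₂` in
`G(g₀,…,g₄)` is nonzero; in particular `G(g₀,…,g₄) ≠ 0`. -/
theorem stmt_4 (k : Type*) [Field k] [CharZero k]
    (g₄ : MvPolynomial (Fin 3) k) (hg₄ : g₄.IsHomogeneous 3)
    (hc : coeff (Finsupp.single (0 : Fin 3) 3) g₄ ≠ 0)
    (G₂ G₃ : MvPolynomial (Fin 4) k) (hG₂ : G₂.IsHomogeneous 2) (hG₃ : G₃.IsHomogeneous 3)
    (G : MvPolynomial (Fin 5) k)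
    (hG : G = X 4 ^ 2 * X 3 + X 4 * rename Fin.castSucc G₂ + rename Fin.castSucc G₃)
    (g : Fin 5 → MvPolynomial (Fin 3) k)
    (hg : g = ![X 0 ^ 2 * X 1, X 1 ^ 2 * X 2, X 2 ^ 2 * X 0, X 0 * X 1 * X 2, g₄]) :
    coeff (Finsupp.single (0 : Fin 3) 7 + Finsupp.single 1 1 + Finsupp.single 2 1)
        (aeval g G) ≠ 0 ∧ aeval g G ≠ 0 := by
  classical
  set m : Fin 3 →₀ ℕ :=
    Finsupp.single (0 : Fin 3) 7 + Finsupp.single 1 1 + Finsupp.single 2 1 with hm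
  -- weight of the target monomial
  have hwm : w m = 6 := by
    simp [w, hm, Finsupp.add_apply, Finsupp.single_apply]
  -- g₄ has weight bound 3
  have hBg4 : Bdd g₄ 3 := by
    intro u hu
    have hdeg : u.degree = 3 := by
      by_contra h; exact hu (hg₄.coeff_eq_zero h)
    rw [deg3] at hdeg
    simp only [w]
    omega
  -- the substituted variables have weight bound 1
  have hf : ∀ i : Fin 4, Bdd (g (Fin.castSucc i)) 1 := by
    intro i
    fin_cases i
    · -- X 0 ^ 2 * X 1
      show Bdd (g 0) 1
      rw [show g 0 = X 0 ^ 2 * X 1 from by rw [hg]; rfl]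
      have := (Bdd_X0.pow 2).mul Bdd_X1 (k := k)
      norm_num at this
      exact this
    · -- X 1 ^ 2 * X 2
      show Bdd (g 1) 1
      rw [show g 1 = X 1 ^ 2 * X 2 from by rw [hg]; rfl]
      have := (Bdd_X1.pow 2).mul Bdd_X2 (k := k)
      norm_num at this
      exact this.mono (by norm_num)
    · -- X 2 ^ 2 * X 0
      show Bdd (g 2) 1
      rw [show g 2 = X 2 ^ 2 * X 0 from by rw [hg]; rfl]
      have := (Bdd_X2.pow 2).mul Bdd_X0 (k := k)
      norm_num at this
      exact this
    · -- X 0 * X 1 * X 2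
      show Bdd (g 3) 1
      rw [show g 3 = X 0 * X 1 * X 2 from by rw [hg]; rfl]
      have := (Bdd_X0.mul Bdd_X1).mul Bdd_X2 (k := k)
      norm_num at this
      exact this.mono (by norm_num)
  -- decompose the substitution
  have hsplit : aeval g G =
      g 4 ^ 2 * g 3 + g 4 * aeval (g ∘ Fin.castSucc) G₂ + aeval (g ∘ Fin.castSucc) G₃ := by
    rw [hG, map_add, map_add, map_mul, map_pow, aeval_X, aeval_X, map_mul, aeval_X,
      aeval_rename, aeval_rename]
  have hg3 : g 3 = X 0 * X 1 * X 2 := by rw [hg]; rfl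
  have hg4 : g 4 = g₄ := by rw [hg]; rfl
  -- the two spurious terms have coefficient 0 at m
  have hB2 : Bdd (g 4 * aeval (g ∘ Fin.castSucc) G₂) 5 := by
    rw [hg4]
    have := hBg4.mul (Bdd_aeval G₂ hG₂ (g ∘ Fin.castSucc) hf)
    exact this.mono (by norm_num)
  have hB3 : Bdd (aeval (g ∘ Fin.castSucc) G₃) 3 :=
    Bdd_aeval G₃ hG₃ (g ∘ Fin.castSucc) hf
  have hz2 : coeff m (g 4 * aeval (g ∘ Fin.castSucc) G₂) = 0 := by
    by_contra h
    have := hB2 m h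
    rw [hwm] at this; omega
  have hz3 : coeff m (aeval (g ∘ Fin.castSucc) G₃) = 0 := by
    by_contra h
    have := hB3 m h
    rw [hwm] at this; omega
  -- the main term
  have hmain : coeff m (g 4 ^ 2 * g 3) =
      coeff (Finsupp.single (0 : Fin 3) 3) g₄ * coeff (Finsupp.single (0 : Fin 3) 3) g₄ := by
    rw [hg3, hg4]
    have hassoc : g₄ ^ 2 * (X 0 * X 1 * X 2) = ((g₄ ^ 2 * X 0) * X 1) * X 2 := by ring
    rw [hassoc, hm, coeff_mul_X, coeff_mul_X]
    have h7 : Finsupp.single (0 : Fin 3) 7 =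
        Finsupp.single (0 : Fin 3) 6 + Finsupp.single (0 : Fin 3) 1 := by
      rw [← Finsupp.single_add]
    rw [h7, coeff_mul_X, sq, coeff_mul]
    have hmem : ((Finsupp.single (0 : Fin 3) 3, Finsupp.single (0 : Fin 3) 3)) ∈
        Finset.HasAntidiagonal.antidiagonal (Finsupp.single (0 : Fin 3) 6) := by
      rw [Finset.HasAntidiagonal.mem_antidiagonal, ← Finsupp.single_add]
    rw [Finset.sum_eq_single_of_mem _ hmem]
    intro x hx hne
    rw [Finset.HasAntidiagonal.mem_antidiagonal] at hx
    by_contra hprod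
    have h1 : coeff x.1 g₄ ≠ 0 := fun h => hprod (by rw [h, zero_mul])
    have h2 : coeff x.2 g₄ ≠ 0 := fun h => hprod (by rw [h, mul_zero])
    have d1 : x.1.degree = 3 := by by_contra h; exact h1 (hg₄.coeff_eq_zero h)
    have d2 : x.2.degree = 3 := by by_contra h; exact h2 (hg₄.coeff_eq_zero h)
    rw [deg3] at d1 d2
    have e0 : x.1 0 + x.2 0 = 6 := by
      have := congrArg (fun f => f (0 : Fin 3)) hx
      simpa [Finsupp.add_apply, Finsupp.single_apply] using this
    have e1 : x.1 1 + x.2 1 = 0 := by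
      have := congrArg (fun f => f (1 : Fin 3)) hx
      simpa [Finsupp.add_apply, Finsupp.single_apply] using this
    have e2 : x.1 2 + x.2 2 = 0 := by
      have := congrArg (fun f => f (2 : Fin 3)) hx
      simpa [Finsupp.add_apply, Finsupp.single_apply] using this
    apply hne
    have hx1 : x.1 = Finsupp.single (0 : Fin 3) 3 := by
      ext i
      fin_cases i <;> simp [Finsupp.single_apply] <;> omega
    have hx2 : x.2 = Finsupp.single (0 : Fin 3) 3 := by
      ext i
      fin_cases i <;> simp [Finsupp.single_apply] <;> omega
    exact Prod.ext hx1 hx2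
  have hcoeff : coeff m (aeval g G) ≠ 0 := by
    rw [hsplit, coeff_add, coeff_add, hz2, hz3, add_zero, add_zero, hmain]
    exact mul_ne_zero hc hc
  exact ⟨hcoeff, fun h => hcoeff (by rw [h, coeff_zero])⟩
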